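/- Let X be a Hausdorff topological space, let f₀ : X → ℝ^q be a topological embedding, and let (λ_i)_{i=1}^∞ be a family of continuous functions λ_i : X → [0,∞) whose supports form a locally finite family of compact subsets of X and which satisfy Σ_{i=1}^∞ λ_i(x) = 1 for every x ∈ X. Define λ : X → ℝ by λ(x) = Σ_{i=1}^∞ 2^{-i} λ_i(x), and define f : X → ℝ^{q+1} by f(x) = (f₀(x), 1)/λ(x). Then 0 < λ(x) < 1 for every x ∈ X, the map f is a topological embedding, the image f(X) is a closed subset of ℝ^{q+1}, and consequently f is a proper map. -/

import Mathlib

/-- Let `X` be a Hausdorff space, `f₀ : X → ℝ^q` a topological embedding, and `(λ_i)_{i=1}^∞`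
a family of continuous nonnegative functions whose supports form a locally finite family of
compact subsets of `X` and with `Σ_i λ_i(x) = 1` for every `x`.  Let
`λ(x) = Σ_{i=1}^∞ 2^{-i} λ_i(x)` and `f(x) = (f₀(x), 1) / λ(x) ∈ ℝ^{q+1}`.  Then
`0 < λ(x) < 1` for all `x`, the map `f` is a topological embedding, its image `f(X)` is
closed in `ℝ^{q+1}`, and consequently `f` is proper. -/
theorem subanalytic_triangulation_stmt5
    {X : Type*} [TopologicalSpace X] [T2Space X] (q : ℕ)
    (f₀ : X → (Fin q → ℝ)) (hf₀ : Topology.IsEmbedding f₀)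
    (lam : ℕ → X → ℝ)
    (hcont : ∀ i, Continuous (lam i))
    (hnonneg : ∀ i x, 0 ≤ lam i x)
    (hcompact : ∀ i, IsCompact (tsupport (lam i)))
    (hlocfin : LocallyFinite fun i => tsupport (lam i))
    (hsum : ∀ x, ∑' i : ℕ, lam i x = 1)
    (lamS : X → ℝ) (hlamS : ∀ x, lamS x = ∑' i : ℕ, (2 : ℝ)⁻¹ ^ (i + 1) * lam i x)
    (f : X → (Fin (q + 1) → ℝ)) (hf : ∀ x, f x = (lamS x)⁻¹ • (Fin.snoc (f₀ x) 1 : Fin (q + 1) → ℝ)) :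
    (∀ x, 0 < lamS x ∧ lamS x < 1) ∧
    Topology.IsEmbedding f ∧
    IsClosed (Set.range f) ∧
    IsProperMap f := by
  classical
  -- summability of the basic family
  have hsumm : ∀ x, Summable fun i => lam i x := by
    intro x
    by_contra h
    have := hsum x
    rw [tsum_eq_zero_of_not_summable h] at this
    norm_num at this
  have hle1 : ∀ i x, lam i x ≤ 1 := by
    intro i x
    have := (hsumm x).le_tsum i (fun j _ => hnonneg j x)
    rw [hsum x] at this
    exact this
  have hsummS : ∀ x, Summable fun i => (2 : ℝ)⁻¹ ^ (i + 1) * lam i x := by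
    intro x
    refine (hsumm x).of_nonneg_of_le
      (fun i => mul_nonneg (by positivity) (hnonneg i x)) (fun i => ?_)
    calc (2 : ℝ)⁻¹ ^ (i + 1) * lam i x
        ≤ 1 * lam i x := by
          apply mul_le_mul_of_nonneg_right _ (hnonneg i x)
          exact pow_le_one₀ (by norm_num) (by norm_num)
      _ = lam i x := one_mul _
  -- positivity
  have hSpos : ∀ x, 0 < lamS x := by
    intro x
    obtain ⟨i, hi⟩ : ∃ i, 0 < lam i x := by
      by_contra h
      push_neg at h
      have hz : ∀ i, lam i x = 0 := fun i => le_antisymm (h i) (hnonneg i x)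
      have := hsum x
      simp [hz] at this
    calc (0 : ℝ) < (2 : ℝ)⁻¹ ^ (i + 1) * lam i x := by positivity
      _ ≤ lamS x := by
          rw [hlamS x]
          exact (hsummS x).le_tsum i (fun j _ => mul_nonneg (by positivity) (hnonneg j x))
  -- upper bound 1/2
  have hShalf : ∀ x, lamS x ≤ 2⁻¹ := by
    intro x
    rw [hlamS x]
    calc ∑' i, (2 : ℝ)⁻¹ ^ (i + 1) * lam i x
        ≤ ∑' i, (2 : ℝ)⁻¹ * lam i x := by
          refine Summable.tsum_le_tsum (fun i => ?_) (hsummS x) ((hsumm x).mul_left _)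
          apply mul_le_mul_of_nonneg_right _ (hnonneg i x)
          simpa using pow_le_pow_of_le_one (by norm_num : (0:ℝ) ≤ 2⁻¹) (by norm_num)
            (Nat.one_le_iff_ne_zero.mpr (Nat.succ_ne_zero i))
      _ = 2⁻¹ := by rw [tsum_mul_left, hsum x, mul_one]
  -- continuity of lamS
  have hgeo : Summable fun i : ℕ => (2 : ℝ)⁻¹ ^ (i + 1) := by
    simpa [pow_succ] using
      (summable_geometric_of_lt_one (by norm_num : (0:ℝ) ≤ 2⁻¹) (by norm_num)).mul_right 2⁻¹
  have hScont : Continuous lamS := by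
    have h1 : Continuous fun x => ∑' i, (2 : ℝ)⁻¹ ^ (i + 1) * lam i x := by
      refine continuous_tsum (fun i => continuous_const.mul (hcont i)) hgeo (fun n x => ?_)
      rw [Real.norm_eq_abs, abs_of_nonneg (mul_nonneg (by positivity) (hnonneg n x))]
      calc (2 : ℝ)⁻¹ ^ (n + 1) * lam n x
          ≤ (2 : ℝ)⁻¹ ^ (n + 1) * 1 :=
            mul_le_mul_of_nonneg_left (hle1 n x) (by positivity)
        _ = (2 : ℝ)⁻¹ ^ (n + 1) := mul_one _
    have : lamS = fun x => ∑' i, (2 : ℝ)⁻¹ ^ (i + 1) * lam i x := funext hlamS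
    rw [this]; exact h1
  -- continuity of f
  have hsnoc : Continuous fun x => (Fin.snoc (f₀ x) 1 : Fin (q + 1) → ℝ) := by
    apply continuous_pi
    intro i
    refine Fin.lastCases ?_ ?_ i
    · simpa [Fin.snoc_last] using (continuous_const : Continuous fun _ : X => (1 : ℝ))
    · intro j
      simpa [Fin.snoc_castSucc, Function.comp_def] using (continuous_apply j).comp hf₀.continuous
  have hfcont : Continuous f := by
    have h1 := (hScont.inv₀ (fun x => (hSpos x).ne')).smul hsnoc
    have : f = fun x => (lamS x)⁻¹ • (Fin.snoc (f₀ x) 1 : Fin (q + 1) → ℝ) := funext hf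
    rw [this]; exact h1
  -- the "dehomogenization" map g
  set g : (Fin (q + 1) → ℝ) → (Fin q → ℝ) :=
    fun y => (max (y (Fin.last q)) 1)⁻¹ • fun i => y i.castSucc with hg
  have hgcont : Continuous g := by
    refine Continuous.smul (Continuous.inv₀ ((continuous_apply _).max continuous_const)
      (fun y => ?_)) (continuous_pi fun i => continuous_apply _)
    have : (1 : ℝ) ≤ max (y (Fin.last q)) 1 := le_max_right _ _
    linarith
  have hlast : ∀ x, f x (Fin.last q) = (lamS x)⁻¹ := by
    intro x
    rw [hf]
    simp [Fin.snoc_last]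
  have hgf : g ∘ f = f₀ := by
    funext x
    have hinv1 : (1 : ℝ) ≤ (lamS x)⁻¹ := by
      rw [one_le_inv_iff₀]
      exact ⟨hSpos x, by linarith [hShalf x]⟩
    have hmax : max (f x (Fin.last q)) 1 = (lamS x)⁻¹ := by
      rw [hlast x]; exact max_eq_left hinv1
    have hcast : (fun i => f x i.castSucc) = (lamS x)⁻¹ • f₀ x := by
      funext i
      rw [hf]
      simp [Fin.snoc_castSucc]
    simp only [Function.comp, hg]
    rw [hmax, inv_inv, hcast, smul_smul, mul_inv_cancel₀ (hSpos x).ne', one_smul]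
  have hemb : Topology.IsEmbedding f :=
    Topology.IsEmbedding.of_comp hfcont hgcont (hgf ▸ hf₀)
  -- closedness of the range
  haveI : TopologicalSpace.MetrizableSpace X := hf₀.metrizableSpace
  have hclosed : IsClosed (Set.range f) := by
    apply IsSeqClosed.isClosed
    intro u y hu huy
    choose x hx using hu
    have hul : ∀ n, u n (Fin.last q) = (lamS (x n))⁻¹ := fun n => by
      rw [← hx n, hlast]
    have hyl : Filter.Tendsto (fun n => (lamS (x n))⁻¹) Filter.atTop
        (nhds (y (Fin.last q))) := by
      have := ((continuous_apply (Fin.last q)).tendsto y).comp huy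
      simp only [Function.comp_def] at this
      simpa [hul] using this
    have hinv2 : ∀ z, (2 : ℝ) ≤ (lamS z)⁻¹ := by
      intro z
      have := inv_anti₀ (hSpos z) (hShalf z)
      simpa using this
    have hyl2 : (2 : ℝ) ≤ y (Fin.last q) :=
      ge_of_tendsto hyl (Filter.Eventually.of_forall fun n => hinv2 (x n))
    have hypos : (0 : ℝ) < y (Fin.last q) := by linarith
    set c := (y (Fin.last q))⁻¹ with hc
    have hcpos : 0 < c := inv_pos.mpr hypos
    have hlimS : Filter.Tendsto (fun n => lamS (x n)) Filter.atTop (nhds c) := by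
      have := hyl.inv₀ hypos.ne'
      simpa using this
    obtain ⟨N, hN⟩ : ∃ N, (2 : ℝ)⁻¹ ^ N < c / 2 :=
      exists_pow_lt_of_lt_one (by linarith) (by norm_num)
    set K : Set X := ⋃ i ∈ Finset.range N, tsupport (lam i) with hK
    have hKcomp : IsCompact K := (Finset.range N).isCompact_biUnion (fun i _ => hcompact i)
    have hout : ∀ z, z ∉ K → lamS z ≤ (2 : ℝ)⁻¹ ^ N := by
      intro z hz
      have hz' : ∀ i < N, lam i z = 0 := by
        intro i hi
        refine image_eq_zero_of_notMem_tsupport (fun h => hz ?_)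
        exact Set.mem_biUnion (Finset.mem_range.mpr hi) h
      rw [hlamS]
      calc ∑' i, (2 : ℝ)⁻¹ ^ (i + 1) * lam i z
          ≤ ∑' i, (2 : ℝ)⁻¹ ^ N * lam i z := by
            refine Summable.tsum_le_tsum (fun i => ?_) (hsummS z) ((hsumm z).mul_left _)
            rcases lt_or_ge i N with hi | hi
            · rw [hz' i hi]; simp
            · exact mul_le_mul_of_nonneg_right
                (pow_le_pow_of_le_one (by norm_num) (by norm_num) (by omega)) (hnonneg i z)
        _ = (2 : ℝ)⁻¹ ^ N := by rw [tsum_mul_left, hsum z, mul_one]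
    have hev : ∀ᶠ n in Filter.atTop, x n ∈ K := by
      have h2 : ∀ᶠ n in Filter.atTop, c / 2 < lamS (x n) :=
        hlimS.eventually (eventually_gt_nhds (by linarith))
      filter_upwards [h2] with n hn
      by_contra h
      have := hout _ h
      linarith
    obtain ⟨M, hM⟩ := Filter.eventually_atTop.mp hev
    have hmem : ∀ n, x (n + M) ∈ K := fun n => hM _ (Nat.le_add_left _ _)
    obtain ⟨a, _, φ, hφ, hconv⟩ := hKcomp.tendsto_subseq hmem
    refine ⟨a, ?_⟩
    have h1 : Filter.Tendsto (fun n => f (x (φ n + M))) Filter.atTop (nhds (f a)) := by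
      have := (hfcont.tendsto a).comp hconv
      simpa [Function.comp_def] using this
    have h2 : Filter.Tendsto (fun n => f (x (φ n + M))) Filter.atTop (nhds y) := by
      have hφt : Filter.Tendsto (fun n => φ n + M) Filter.atTop Filter.atTop :=
        Filter.tendsto_atTop_mono (fun n => Nat.le_add_right _ _) hφ.tendsto_atTop
      have := huy.comp hφt
      simpa [Function.comp_def, fun n => hx (φ n + M)] using this
    exact tendsto_nhds_unique h1 h2
  exact ⟨fun x => ⟨hSpos x, lt_of_le_of_lt (hShalf x) (by norm_num)⟩, hemb, hclosed,
    (Topology.IsClosedEmbedding.mk hemb hclosed).isProperMap⟩
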